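/- Let σ, σ̃ be distinct letters from AP \ {wht, shdw}. Let φ_last := G(shdw), φ_stl := wht ∧ G(wht ∨ φ_last), and define φ_transfer^{σ,σ̃} := ψ_shadowy ∧ G(σ → wht) ∧ G(σ̃ → shdw) ∧ G(wht → Half([wht ∧ σ] ∨ [shdw ∧ ¬σ̃])) ∧ (F(φ_stl ∧ σ) ↔ F(φ_last ∧ σ̃)), where ψ_shadowy is the LTL_F+Half formula defining shadowy words. Then for every finite word w: w,0 ⊨ φ_transfer^{σ,σ̃} if and only if (1) w is shadowy, (2) only even (white) positions of w contain σ and only odd (shadow) positions contain σ̃, and (3) for every even position p with p+1 < |w|: σ ∈ w_p iff σ̃ ∈ w_{p+1}. -/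
import Mathlib


/- STATEMENT 9: The LTL_F+Half formula φ_transfer^{σ,σ̃} characterises the transfer
of σ from white positions to σ̃ on their shadows. -/

namespace Transfer9

abbrev Word := List (Set ℕ)

inductive Formula where
  | atom (a : ℕ)
  | neg (φ : Formula)
  | conj (φ ψ : Formula)
  | fut (φ : Formula)
  | half (φ : Formula)

def Sat (w : Word) : ℕ → Formula → Prop
  | i, .atom a => a ∈ w.getD i ∅
  | i, .neg φ => ¬ Sat w i φ
  | i, .conj φ ψ => Sat w i φ ∧ Sat w i ψ
  | i, .fut φ => ∃ j, i ≤ j ∧ j < w.length ∧ Sat w j φ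
  | i, .half φ => 2 * Set.ncard {j | j < i ∧ Sat w j φ} = i

def fdisj (φ ψ : Formula) : Formula := .neg (.conj (.neg φ) (.neg ψ))
def fimpl (φ ψ : Formula) : Formula := fdisj (.neg φ) ψ
def fiff (φ ψ : Formula) : Formula := .conj (fimpl φ ψ) (fimpl ψ φ)
def G (φ : Formula) : Formula := .neg (.fut (.neg φ))

def φinit (wht shdw : ℕ) : Formula :=
  .conj (.atom wht)
    (.conj (G (fiff (.atom wht) (.neg (.atom shdw))))
           (G (fimpl (.atom wht) (.fut (.atom shdw)))))

/-- `ψ_shadowy`, the formula defining shadowy words. -/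
def ψshadowy (wht shdw : ℕ) : Formula :=
  .conj (φinit wht shdw) (G (fiff (.half (.atom wht)) (.atom wht)))

/-- `φ_last := G(shdw)`. -/
def φlast (shdw : ℕ) : Formula := G (.atom shdw)

/-- `φ_stl := wht ∧ G(wht ∨ φ_last)`. -/
def φstl (wht shdw : ℕ) : Formula := .conj (.atom wht) (G (fdisj (.atom wht) (φlast shdw)))

/-- `φ_transfer^{σ,σ̃}`. -/
def φtransfer (wht shdw σ σt : ℕ) : Formula :=
  .conj (ψshadowy wht shdw)
    (.conj (G (fimpl (.atom σ) (.atom wht)))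
      (.conj (G (fimpl (.atom σt) (.atom shdw)))
        (.conj (G (fimpl (.atom wht)
                    (.half (fdisj (.conj (.atom wht) (.atom σ))
                                  (.conj (.atom shdw) (.neg (.atom σt)))))))
               (fiff (.fut (.conj (φstl wht shdw) (.atom σ)))
                     (.fut (.conj (φlast shdw) (.atom σt)))))))

def Shadowy (wht shdw : ℕ) (w : Word) : Prop :=
  Even w.length ∧
  (∀ j < w.length, Even j → wht ∈ w.getD j ∅ ∧ shdw ∉ w.getD j ∅) ∧
  (∀ j < w.length, Odd j → shdw ∈ w.getD j ∅ ∧ wht ∉ w.getD j ∅)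

/-! ### Auxiliary machinery -/

noncomputable def cnt (w : Word) (φ : Formula) (i : ℕ) : ℕ :=
  Set.ncard {j | j < i ∧ Sat w j φ}

lemma sat_atom {w : Word} {i a} : Sat w i (.atom a) ↔ a ∈ w.getD i ∅ := Iff.rfl
lemma sat_neg {w : Word} {i φ} : Sat w i (.neg φ) ↔ ¬ Sat w i φ := Iff.rfl
lemma sat_conj {w : Word} {i φ ψ} : Sat w i (.conj φ ψ) ↔ (Sat w i φ ∧ Sat w i ψ) := Iff.rfl
lemma sat_fut {w : Word} {i φ} : Sat w i (.fut φ) ↔ ∃ j, i ≤ j ∧ j < w.length ∧ Sat w j φ := Iff.rfl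
lemma sat_half {w : Word} {i φ} : Sat w i (.half φ) ↔ 2 * cnt w φ i = i := Iff.rfl

open Classical in
lemma cnt_eq (w : Word) (φ : Formula) (i : ℕ) :
    cnt w φ i = ((Finset.range i).filter (fun j => Sat w j φ)).card := by
  have h : {j | j < i ∧ Sat w j φ} = ((Finset.range i).filter (fun j => Sat w j φ) : Finset ℕ) := by
    ext j; simp
  rw [cnt, h, Set.ncard_coe_finset]

open Classical in
lemma cnt_succ (w : Word) (φ : Formula) (i : ℕ) :
    cnt w φ (i+1) = cnt w φ i + (if Sat w i φ then 1 else 0) := by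
  rw [cnt_eq, cnt_eq, Finset.range_add_one, Finset.filter_insert]
  by_cases hs : Sat w i φ
  · rw [if_pos hs, if_pos hs, Finset.card_insert_of_notMem (by simp)]
  · rw [if_neg hs, if_neg hs]
    exact (Nat.add_zero _).symm

lemma cnt_zero (w : Word) (φ : Formula) : cnt w φ 0 = 0 := by
  rw [cnt_eq]; simp

lemma sat_fdisj {w : Word} {i φ ψ} : Sat w i (fdisj φ ψ) ↔ (Sat w i φ ∨ Sat w i ψ) := by
  simp only [fdisj, sat_neg, sat_conj]; tauto

lemma sat_fimpl {w : Word} {i φ ψ} : Sat w i (fimpl φ ψ) ↔ (Sat w i φ → Sat w i ψ) := by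
  simp only [fimpl, sat_fdisj, sat_neg]; tauto

lemma sat_fiff {w : Word} {i φ ψ} : Sat w i (fiff φ ψ) ↔ (Sat w i φ ↔ Sat w i ψ) := by
  simp only [fiff, sat_conj, sat_fimpl]; tauto

lemma sat_G {w : Word} {i φ} : Sat w i (G φ) ↔ ∀ j, i ≤ j → j < w.length → Sat w j φ := by
  simp only [G, sat_neg, sat_fut]; push_neg; rfl

private lemma odd_of_not_even {n : ℕ} (h : ¬ Even n) : Odd n :=
  Nat.odd_iff.mpr (by rw [Nat.even_iff] at h; omega)

private lemma even_of_not_odd {n : ℕ} (h : ¬ Odd n) : Even n :=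
  Nat.even_iff.mpr (by rw [Nat.odd_iff] at h; omega)

/-! ### Shadowy words -/

lemma cnt_wht {w : Word} {wht : ℕ}
    (hmem : ∀ j < w.length, (wht ∈ w.getD j ∅ ↔ Even j)) :
    ∀ j ≤ w.length, cnt w (.atom wht) j = (j+1)/2 := by
  intro j
  induction j with
  | zero => intro _; simp [cnt_zero]
  | succ k ih =>
    intro hk1
    have ihc := ih (by omega)
    rw [cnt_succ, ihc]
    have hkx : wht ∈ w.getD k ∅ ↔ Even k := hmem k (by omega)
    by_cases hek : Even k
    · rw [if_pos (sat_atom.mpr (hkx.mpr hek))]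
      have := Nat.even_iff.mp hek; omega
    · rw [if_neg (fun hs => hek (hkx.mp (sat_atom.mp hs)))]
      have := Nat.odd_iff.mp (odd_of_not_even hek); omega

lemma shadowy_iff {wht shdw : ℕ} {w : Word} (hw : w ≠ []) :
    Sat w 0 (ψshadowy wht shdw) ↔ Shadowy wht shdw w := by
  have hn : 0 < w.length := List.length_pos_iff.mpr hw
  constructor
  · intro h
    simp only [ψshadowy, φinit, sat_conj, sat_G, sat_fiff, sat_fimpl, sat_neg, sat_atom,
      sat_fut, sat_half] at h
    obtain ⟨⟨h1, h2, h3⟩, h4⟩ := h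
    have key : ∀ j, j ≤ w.length → cnt w (.atom wht) j = (j+1)/2 ∧
        (j < w.length → (wht ∈ w.getD j ∅ ↔ Even j)) := by
      intro j
      induction j with
      | zero =>
        exact fun _ => ⟨cnt_zero w _, fun _ => ⟨fun _ => Even.zero, fun _ => h1⟩⟩
      | succ k ih =>
        intro hk1
        obtain ⟨ihc, ihm⟩ := ih (by omega)
        have hkmem : wht ∈ w.getD k ∅ ↔ Even k := ihm (by omega)
        have hc : cnt w (.atom wht) (k+1) = (k+1+1)/2 := by
          rw [cnt_succ, ihc]
          by_cases hek : Even k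
          · rw [if_pos (sat_atom.mpr (hkmem.mpr hek))]
            have := Nat.even_iff.mp hek; omega
          · rw [if_neg (fun hs => hek (hkmem.mp (sat_atom.mp hs)))]
            have := Nat.odd_iff.mp (odd_of_not_even hek); omega
        refine ⟨hc, fun hlt => ?_⟩
        have h4' := h4 (k+1) (Nat.zero_le _) hlt
        rw [hc] at h4'
        rw [← h4', Nat.even_iff]
        omega
    have hmem : ∀ j < w.length, (wht ∈ w.getD j ∅ ↔ Even j) :=
      fun j hj => (key j hj.le).2 hj
    have heven : Even w.length := by
      rw [Nat.even_iff]
      by_contra hodd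
      have hm : w.length - 1 < w.length := by omega
      have hmw : wht ∈ w.getD (w.length - 1) ∅ :=
        (hmem _ hm).mpr (by rw [Nat.even_iff]; omega)
      obtain ⟨k, hk1, hk2, hk3⟩ := h3 _ (Nat.zero_le _) hm hmw
      have hke : k = w.length - 1 := by omega
      exact ((h2 _ (Nat.zero_le _) hm).mp hmw) (hke ▸ hk3)
    refine ⟨heven, ?_, ?_⟩
    · intro j hj hje
      exact ⟨(hmem j hj).mpr hje, (h2 j (Nat.zero_le _) hj).mp ((hmem j hj).mpr hje)⟩
    · intro j hj hjo
      have hnw : wht ∉ w.getD j ∅ := by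
        intro hwm
        have h5 := Nat.even_iff.mp ((hmem j hj).mp hwm)
        have h6 := Nat.odd_iff.mp hjo
        omega
      refine ⟨?_, hnw⟩
      by_contra hns
      exact hnw ((h2 j (Nat.zero_le _) hj).mpr hns)
  · rintro ⟨hev, hE, hO⟩
    have hmem : ∀ j < w.length, (wht ∈ w.getD j ∅ ↔ Even j) := by
      intro j hj
      rcases Nat.even_or_odd j with he | ho
      · exact iff_of_true (hE j hj he).1 he
      · exact iff_of_false (hO j hj ho).2 (fun he => by
          rw [Nat.even_iff] at he; rw [Nat.odd_iff] at ho; omega)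
    have hcnt := cnt_wht hmem
    simp only [ψshadowy, φinit, sat_conj, sat_G, sat_fiff, sat_fimpl, sat_neg, sat_atom,
      sat_fut, sat_half]
    refine ⟨⟨(hE 0 hn Even.zero).1, fun j _ hj => ?_, fun j _ hj hwm => ?_⟩, fun j _ hj => ?_⟩
    · rcases Nat.even_or_odd j with he | ho
      · exact iff_of_true (hE j hj he).1 (hE j hj he).2
      · exact iff_of_false (hO j hj ho).2 (fun hns => hns (hO j hj ho).1)
    · have he : Even j := (hmem j hj).mp hwm
      have hj1 : j + 1 < w.length := by
        rw [Nat.even_iff] at he hev; omega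
      exact ⟨j+1, by omega, hj1, (hO (j+1) hj1 (Even.add_one he)).1⟩
    · rw [hcnt j hj.le, hmem j hj, Nat.even_iff]
      omega

/-! ### The transfer counting formula -/

abbrev Dform (wht shdw σ σt : ℕ) : Formula :=
  fdisj (.conj (.atom wht) (.atom σ)) (.conj (.atom shdw) (.neg (.atom σt)))

section Transfer

variable {wht shdw σ σt : ℕ} {w : Word}

lemma satD_even
    (hE : ∀ j < w.length, Even j → wht ∈ w.getD j ∅ ∧ shdw ∉ w.getD j ∅)
    {k : ℕ} (hk : k < w.length) (he : Even k) :
    Sat w k (Dform wht shdw σ σt) ↔ σ ∈ w.getD k ∅ := by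
  have h := hE k hk he
  simp only [Dform, sat_fdisj, sat_conj, sat_neg, sat_atom]
  constructor
  · rintro (⟨_, h2⟩ | ⟨h1, _⟩)
    · exact h2
    · exact absurd h1 h.2
  · exact fun hσ => Or.inl ⟨h.1, hσ⟩

lemma satD_odd
    (hO : ∀ j < w.length, Odd j → shdw ∈ w.getD j ∅ ∧ wht ∉ w.getD j ∅)
    {k : ℕ} (hk : k < w.length) (ho : Odd k) :
    Sat w k (Dform wht shdw σ σt) ↔ σt ∉ w.getD k ∅ := by
  have h := hO k hk ho
  simp only [Dform, sat_fdisj, sat_conj, sat_neg, sat_atom]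
  constructor
  · rintro (⟨h1, _⟩ | ⟨_, h2⟩)
    · exact absurd h1 h.2
    · exact h2
  · exact fun hσ => Or.inr ⟨h.1, hσ⟩

lemma cntD_of_transfer
    (hE : ∀ j < w.length, Even j → wht ∈ w.getD j ∅ ∧ shdw ∉ w.getD j ∅)
    (hO : ∀ j < w.length, Odd j → shdw ∈ w.getD j ∅ ∧ wht ∉ w.getD j ∅)
    (hT : ∀ p, Even p → p + 1 < w.length → (σ ∈ w.getD p ∅ ↔ σt ∈ w.getD (p+1) ∅)) :
    ∀ t, 2 * t ≤ w.length → cnt w (Dform wht shdw σ σt) (2 * t) = t := by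
  intro t
  induction t with
  | zero => intro _; exact cnt_zero w _
  | succ s ih =>
    intro hs
    have h1 : 2 * s < w.length := by omega
    have h2 : 2 * s + 1 < w.length := by omega
    have he : Even (2 * s) := even_two_mul s
    have e1 := satD_even (σ := σ) (σt := σt) hE h1 he
    have e2 := satD_odd (σ := σ) (σt := σt) hO h2 (Even.add_one he)
    have ht := hT (2 * s) he h2
    have h3 : 2 * (s + 1) = (2 * s + 1) + 1 := by ring
    rw [h3, cnt_succ, cnt_succ, ih (by omega)]
    by_cases hσ : σ ∈ w.getD (2 * s) ∅
    · rw [if_pos (e1.mpr hσ), if_neg (fun hd => (e2.mp hd) (ht.mp hσ))]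
    · rw [if_neg (fun hd => hσ (e1.mp hd)), if_pos (e2.mpr (fun hc => hσ (ht.mpr hc)))]

open Classical in
lemma transfer_of_cnt
    (hE : ∀ j < w.length, Even j → wht ∈ w.getD j ∅ ∧ shdw ∉ w.getD j ∅)
    (hO : ∀ j < w.length, Odd j → shdw ∈ w.getD j ∅ ∧ wht ∉ w.getD j ∅)
    (hhalf : ∀ j < w.length, Even j → 2 * cnt w (Dform wht shdw σ σt) j = j) :
    ∀ p, Even p → p + 2 < w.length → (σ ∈ w.getD p ∅ ↔ σt ∈ w.getD (p+1) ∅) := by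
  intro p hp hp2
  have hp1 : p + 1 < w.length := by omega
  have hplt : p < w.length := by omega
  have hpe : Even (p + 2) := by rw [Nat.even_iff] at hp ⊢; omega
  have c1 := hhalf p hplt hp
  have c2 := hhalf (p+2) hp2 hpe
  have e1 := satD_even (σ := σ) (σt := σt) hE hplt hp
  have e2 := satD_odd (σ := σ) (σt := σt) hO hp1 (Even.add_one hp)
  have hstep : cnt w (Dform wht shdw σ σt) (p+2)
      = cnt w (Dform wht shdw σ σt) p
        + (if Sat w p (Dform wht shdw σ σt) then 1 else 0)
        + (if Sat w (p+1) (Dform wht shdw σ σt) then 1 else 0) := by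
    rw [show p + 2 = (p+1)+1 from rfl, cnt_succ, cnt_succ]
  rw [hstep] at c2
  by_cases hσ : σ ∈ w.getD p ∅ <;> by_cases hσt : σt ∈ w.getD (p+1) ∅
  · exact iff_of_true hσ hσt
  · rw [if_pos (e1.mpr hσ), if_pos (e2.mpr hσt)] at c2; omega
  · rw [if_neg (fun h => hσ (e1.mp h)), if_neg (fun h => (e2.mp h) hσt)] at c2; omega
  · exact iff_of_false hσ hσt

/-! ### The formulas `φlast` and `φstl` single out the last pair -/

lemma sat_φlast_iff
    (hE : ∀ j < w.length, Even j → wht ∈ w.getD j ∅ ∧ shdw ∉ w.getD j ∅)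
    (hO : ∀ j < w.length, Odd j → shdw ∈ w.getD j ∅ ∧ wht ∉ w.getD j ∅)
    (hev : Even w.length) (hn : 0 < w.length)
    {i : ℕ} (hi : i < w.length) :
    Sat w i (φlast shdw) ↔ i = w.length - 1 := by
  rw [φlast, sat_G]
  constructor
  · intro h
    by_contra hne
    have hi2 : i < w.length - 1 := by omega
    rcases Nat.even_or_odd i with he | ho
    · exact (hE i (by omega) he).2 (sat_atom.mp (h i le_rfl (by omega)))
    · have hlt : i + 1 < w.length := by omega
      exact (hE (i+1) hlt (Odd.add_one ho)).2 (sat_atom.mp (h (i+1) (by omega) hlt))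
  · intro h j hj1 hj2
    have hje : j = w.length - 1 := by omega
    subst hje
    have hjo : Odd (w.length - 1) := by
      rw [Nat.odd_iff]; rw [Nat.even_iff] at hev; omega
    exact sat_atom.mpr (hO _ hj2 hjo).1

lemma sat_φstl_iff
    (hE : ∀ j < w.length, Even j → wht ∈ w.getD j ∅ ∧ shdw ∉ w.getD j ∅)
    (hO : ∀ j < w.length, Odd j → shdw ∈ w.getD j ∅ ∧ wht ∉ w.getD j ∅)
    (hev : Even w.length) (hn2 : 2 ≤ w.length)
    {i : ℕ} (hi : i < w.length) :
    Sat w i (φstl wht shdw) ↔ i = w.length - 2 := by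
  have hn : 0 < w.length := by omega
  rw [φstl, sat_conj, sat_atom, sat_G]
  constructor
  · rintro ⟨hwm, hall⟩
    have hie : Even i := by
      by_contra ho
      exact (hO i hi (odd_of_not_even ho)).2 hwm
    by_contra hne
    have hilt : i < w.length - 2 := by
      rw [Nat.even_iff] at hie hev; omega
    have h1 : i + 1 < w.length := by omega
    have hd := hall (i+1) (by omega) h1
    rw [sat_fdisj, sat_atom] at hd
    rcases hd with hw1 | hl1
    · exact (hO (i+1) h1 (Even.add_one hie)).2 hw1
    · have := (sat_φlast_iff hE hO hev hn h1).mp hl1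
      omega
  · intro h
    subst h
    have hie : Even (w.length - 2) := by rw [Nat.even_iff] at hev ⊢; omega
    refine ⟨(hE _ hi hie).1, ?_⟩
    intro j hj1 hj2
    rw [sat_fdisj, sat_atom]
    by_cases hj : j = w.length - 1
    · exact Or.inr ((sat_φlast_iff hE hO hev hn hj2).mpr hj)
    · have hje : j = w.length - 2 := by omega
      subst hje
      exact Or.inl (hE _ hj2 hie).1

lemma satF_stl
    (hE : ∀ j < w.length, Even j → wht ∈ w.getD j ∅ ∧ shdw ∉ w.getD j ∅)
    (hO : ∀ j < w.length, Odd j → shdw ∈ w.getD j ∅ ∧ wht ∉ w.getD j ∅)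
    (hev : Even w.length) (hn2 : 2 ≤ w.length) :
    Sat w 0 (.fut (.conj (φstl wht shdw) (.atom σ))) ↔ σ ∈ w.getD (w.length - 2) ∅ := by
  rw [sat_fut]
  constructor
  · rintro ⟨j, _, hj2, hj3⟩
    obtain ⟨hstl, hσm⟩ := sat_conj.mp hj3
    have hje := (sat_φstl_iff hE hO hev hn2 hj2).mp hstl
    rw [hje] at hσm
    exact sat_atom.mp hσm
  · intro hσm
    have hlt : w.length - 2 < w.length := by omega
    exact ⟨w.length - 2, Nat.zero_le _, hlt,
      sat_conj.mpr ⟨(sat_φstl_iff hE hO hev hn2 hlt).mpr rfl, sat_atom.mpr hσm⟩⟩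

lemma satF_last
    (hE : ∀ j < w.length, Even j → wht ∈ w.getD j ∅ ∧ shdw ∉ w.getD j ∅)
    (hO : ∀ j < w.length, Odd j → shdw ∈ w.getD j ∅ ∧ wht ∉ w.getD j ∅)
    (hev : Even w.length) (hn2 : 2 ≤ w.length) :
    Sat w 0 (.fut (.conj (φlast shdw) (.atom σt))) ↔ σt ∈ w.getD (w.length - 1) ∅ := by
  have hn : 0 < w.length := by omega
  rw [sat_fut]
  constructor
  · rintro ⟨j, _, hj2, hj3⟩
    obtain ⟨hlast, hσm⟩ := sat_conj.mp hj3
    have hje := (sat_φlast_iff hE hO hev hn hj2).mp hlast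
    rw [hje] at hσm
    exact sat_atom.mp hσm
  · intro hσm
    have hlt : w.length - 1 < w.length := by omega
    exact ⟨w.length - 1, Nat.zero_le _, hlt,
      sat_conj.mpr ⟨(sat_φlast_iff hE hO hev hn hlt).mpr rfl, sat_atom.mpr hσm⟩⟩

end Transfer

theorem φtransfer_correct
    (wht shdw σ σt : ℕ)
    (hws : wht ≠ shdw) (hσσt : σ ≠ σt)
    (hσw : σ ≠ wht) (hσs : σ ≠ shdw) (hσtw : σt ≠ wht) (hσts : σt ≠ shdw)
    (w : Word) (hw : w ≠ []) :
    Sat w 0 (φtransfer wht shdw σ σt) ↔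
      (Shadowy wht shdw w ∧
       (∀ j < w.length, σ ∈ w.getD j ∅ → Even j) ∧
       (∀ j < w.length, σt ∈ w.getD j ∅ → Odd j) ∧
       (∀ p, Even p → p + 1 < w.length →
          (σ ∈ w.getD p ∅ ↔ σt ∈ w.getD (p + 1) ∅))) := by
  have hn : 0 < w.length := List.length_pos_iff.mpr hw
  constructor
  · intro h
    simp only [φtransfer, sat_conj] at h
    obtain ⟨hψ, hσG, hσtG, hhalfG, hiffF⟩ := h
    obtain ⟨hev, hE, hO⟩ := (shadowy_iff hw).mp hψ
    have hn2 : 2 ≤ w.length := by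
      rw [Nat.even_iff] at hev; omega
    rw [sat_G] at hσG hσtG hhalfG
    have hσ' : ∀ j < w.length, σ ∈ w.getD j ∅ → Even j := by
      intro j hj hm
      have hw' := (sat_fimpl.mp (hσG j (Nat.zero_le _) hj)) (sat_atom.mpr hm)
      by_contra ho
      exact (hO j hj (odd_of_not_even ho)).2 (sat_atom.mp hw')
    have hσt' : ∀ j < w.length, σt ∈ w.getD j ∅ → Odd j := by
      intro j hj hm
      have hs' := (sat_fimpl.mp (hσtG j (Nat.zero_le _) hj)) (sat_atom.mpr hm)
      by_contra ho
      exact (hE j hj (even_of_not_odd ho)).2 (sat_atom.mp hs')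
    have hhalf : ∀ j < w.length, Even j → 2 * cnt w (Dform wht shdw σ σt) j = j := by
      intro j hj hje
      have hh := sat_fimpl.mp (hhalfG j (Nat.zero_le _) hj) (sat_atom.mpr (hE j hj hje).1)
      exact sat_half.mp hh
    have htrans2 := transfer_of_cnt hE hO hhalf
    have hlastpair : (σ ∈ w.getD (w.length - 2) ∅ ↔ σt ∈ w.getD (w.length - 1) ∅) := by
      rw [sat_fiff] at hiffF
      rw [← satF_stl hE hO hev hn2, ← satF_last hE hO hev hn2]
      exact hiffF
    refine ⟨⟨hev, hE, hO⟩, hσ', hσt', ?_⟩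
    intro p hp hp1
    by_cases hcase : p + 2 < w.length
    · exact htrans2 p hp hcase
    · have h1 : p = w.length - 2 := by omega
      have h2 : w.length - 2 + 1 = w.length - 1 := by omega
      rw [h1, h2]
      exact hlastpair
  · rintro ⟨⟨hev, hE, hO⟩, hσ', hσt', hT⟩
    have hn2 : 2 ≤ w.length := by
      rw [Nat.even_iff] at hev; omega
    simp only [φtransfer, sat_conj]
    refine ⟨(shadowy_iff hw).mpr ⟨hev, hE, hO⟩, ?_, ?_, ?_, ?_⟩
    · rw [sat_G]
      intro j _ hj
      rw [sat_fimpl, sat_atom, sat_atom]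
      exact fun hm => (hE j hj (hσ' j hj hm)).1
    · rw [sat_G]
      intro j _ hj
      rw [sat_fimpl, sat_atom, sat_atom]
      exact fun hm => (hO j hj (hσt' j hj hm)).1
    · rw [sat_G]
      intro j _ hj
      rw [sat_fimpl, sat_atom]
      intro hm
      have hje : Even j := by
        by_contra ho
        exact (hO j hj (odd_of_not_even ho)).2 hm
      rw [sat_half]
      show 2 * cnt w (Dform wht shdw σ σt) j = j
      obtain ⟨t, ht⟩ := hje
      have hjt : j = 2 * t := by omega
      rw [hjt, cntD_of_transfer hE hO hT t (by omega)]
    · rw [sat_fiff, satF_stl hE hO hev hn2, satF_last hE hO hev hn2]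
      have he2 : Even (w.length - 2) := by rw [Nat.even_iff] at hev ⊢; omega
      have h12 : w.length - 2 + 1 = w.length - 1 := by omega
      have := hT (w.length - 2) he2 (by omega)
      rwa [h12] at this
end Transfer9
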